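/- Let X be a proper geodesic metric space with basepoint e. Any geodesic ray from e representing an M-Morse direction z is M_C-Morse, where the Morse gauge M_C depends only on M (and not on z or the ray). -/

import Mathlib

open Set

/-- A Morse gauge. -/
abbrev MorseGauge := ℝ → ℝ → ℝ

variable {X : Type*} [MetricSpace X]

/-- `γ` is a `(L, e)`-quasi-geodesic on the parameter set `s`. -/
def IsQGOn (L e : ℝ) (γ : ℝ → X) (s : Set ℝ) : Prop :=
  ∀ t ∈ s, ∀ u ∈ s,
    (1 / L) * |t - u| - e ≤ dist (γ t) (γ u) ∧ dist (γ t) (γ u) ≤ L * |t - u| + e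

/-- `γ` is a geodesic (unit-speed) on the parameter set `s`. -/
def IsGeodesicOn (γ : ℝ → X) (s : Set ℝ) : Prop :=
  ∀ t ∈ s, ∀ u ∈ s, dist (γ t) (γ u) = |t - u|

/-- `X` is a geodesic metric space. -/
def GeodesicSpace (X : Type*) [MetricSpace X] : Prop :=
  ∀ x y : X, ∃ γ : ℝ → X, γ 0 = x ∧ γ (dist x y) = y ∧ IsGeodesicOn γ (Icc 0 (dist x y))

/-- The path `γ` (defined on the parameter set `s`) is `M`-Morse: every `(L,e)`-quasi-geodesic
(`L ≥ 1`, `e ≥ 0`) with endpoints on `γ` stays in the closed `M L e`-neighbourhood of `γ`. -/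
def IsMorseOn (M : MorseGauge) (γ : ℝ → X) (s : Set ℝ) : Prop :=
  ∀ L e, 1 ≤ L → 0 ≤ e → ∀ (η : ℝ → X) (a b : ℝ), a ≤ b →
    IsQGOn L e η (Icc a b) → η a ∈ γ '' s → η b ∈ γ '' s →
    ∀ t ∈ Icc a b, ∃ u ∈ s, dist (η t) (γ u) ≤ M L e

/-- The constant `δ_M` associated to a Morse gauge `M`. -/
noncomputable def deltaM (M : MorseGauge) : ℝ :=
  max (4 * M 1 (2 * M 5 0) + 2 * M 5 0) (8 * M 3 0)

/-- A geodesic ray from the basepoint `e`. -/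
def IsRayFrom (e : X) (γ : ℝ → X) : Prop :=
  γ 0 = e ∧ IsGeodesicOn γ (Ici 0)

lemma key_lemma (M : MorseGauge) (hX : GeodesicSpace X) (ξ ζ : ℝ → X)
    (hM : IsMorseOn M ξ (Ici 0)) (hζ : IsGeodesicOn ζ (Ici 0))
    (u v : ℝ) (hu : 0 ≤ u) (huv : u ≤ v) (ε : ℝ) (hε : 0 ≤ ε)
    (p q : X) (hp : p ∈ ξ '' Ici 0) (hq : q ∈ ξ '' Ici 0)
    (H1 : ∀ w ∈ Icc u v,
      max (dist (ζ u) p) (dist (ζ v) q) - ε ≤ Metric.infDist (ζ w) (ξ '' Ici 0))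
    (H2 : 8 * max (dist (ζ u) p) (dist (ζ v) q) ≤ v - u) :
    ∀ w ∈ Icc u v, Metric.infDist (ζ w) (ξ '' Ici 0) ≤ M 3 ε := by
  set a := dist (ζ u) p with ha_def
  set b := dist (ζ v) q with hb_def
  set m := v - u with hm_def
  set T := a + m + b with hT_def
  have ha : 0 ≤ a := dist_nonneg
  have hb : 0 ≤ b := dist_nonneg
  have hm : 0 ≤ m := by simp [hm_def]; linarith
  have hamax : a ≤ max a b := le_max_left _ _
  have hbmax : b ≤ max a b := le_max_right _ _
  have hmaxm : 8 * max a b ≤ m := H2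
  have hmax0 : 0 ≤ max a b := le_trans ha hamax
  -- caps
  obtain ⟨c1, hc10, hc1a, hc1g⟩ := hX p (ζ u)
  obtain ⟨c2, hc20, hc2b, hc2g⟩ := hX (ζ v) q
  have hpa : dist p (ζ u) = a := dist_comm p (ζ u) ▸ rfl
  rw [hpa] at hc1a hc1g
  set η : ℝ → X := fun x => if x ≤ a then c1 x else if x ≤ a + m then ζ (u + (x - a)) else
    c2 (x - (a + m)) with hη_def
  -- evaluation lemmas
  have ev1 : ∀ x ∈ Icc (0:ℝ) a, η x = c1 x := by
    intro x hx; simp only [hη_def]; rw [if_pos hx.2]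
  have ev2 : ∀ x ∈ Icc a (a + m), η x = ζ (u + (x - a)) := by
    intro x hx
    by_cases hxa : x ≤ a
    · have hxx : x = a := le_antisymm hxa hx.1
      simp only [hη_def]; rw [if_pos hxa, hxx, hc1a]
      norm_num
    · simp only [hη_def]; rw [if_neg hxa, if_pos hx.2]
  have ev3 : ∀ x ∈ Icc (a + m) T, η x = c2 (x - (a + m)) := by
    intro x hx
    by_cases hxm : x ≤ a + m
    · have hxx : x = a + m := le_antisymm hxm hx.1
      rw [ev2 x ⟨by linarith, hxm⟩, hxx]
      have h1 : u + (a + m - a) = v := by simp [hm_def]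
      have h2 : a + m - (a + m) = (0:ℝ) := by ring
      rw [h1, h2, hc20]
    · have hxa : ¬ x ≤ a := by intro h; exact hxm (by linarith)
      simp only [hη_def]; rw [if_neg hxa, if_neg hxm]
  -- distances
  have dζ : ∀ s t : ℝ, 0 ≤ s → 0 ≤ t → dist (ζ s) (ζ t) = |s - t| :=
    fun s t hs ht => hζ s hs t ht
  have dc1 : ∀ x ∈ Icc (0:ℝ) a, ∀ y ∈ Icc (0:ℝ) a, dist (c1 x) (c1 y) = |x - y| := hc1g
  have dc2 : ∀ x ∈ Icc (0:ℝ) b, ∀ y ∈ Icc (0:ℝ) b, dist (c2 x) (c2 y) = |x - y| := hc2g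
  have dηp : ∀ x ∈ Icc (0:ℝ) a, dist (η x) p = x := by
    intro x hx
    rw [ev1 x hx, ← hc10, dc1 x hx 0 ⟨le_refl _, ha⟩]
    rw [abs_of_nonneg (by linarith [hx.1] : (0:ℝ) ≤ x - 0)]; ring
  have dηu : ∀ x ∈ Icc (0:ℝ) a, dist (η x) (ζ u) = a - x := by
    intro x hx
    rw [ev1 x hx, ← hc1a, dc1 x hx a ⟨ha, le_refl _⟩, abs_of_nonpos (by linarith [hx.2])]
    ring
  have dmidu : ∀ x ∈ Icc a (a + m), dist (η x) (ζ u) = x - a := by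
    intro x hx
    rw [ev2 x hx, dζ _ _ (by linarith [hx.1]) hu,
      abs_of_nonneg (by linarith [hx.1] : (0:ℝ) ≤ u + (x - a) - u)]
    ring
  have dmidv : ∀ x ∈ Icc a (a + m), dist (η x) (ζ v) = a + m - x := by
    intro x hx
    have hv0 : 0 ≤ v := by linarith
    rw [ev2 x hx, dζ _ _ (by linarith [hx.1]) hv0]
    rw [abs_of_nonpos (by simp [hm_def]; linarith [hx.2])]
    simp [hm_def]; ring
  have dηv : ∀ x ∈ Icc (a + m) T, dist (η x) (ζ v) = x - (a + m) := by
    intro x hx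
    rw [ev3 x hx, ← hc20, dc2 _ ⟨by linarith [hx.1], by simp [hT_def] at hx ⊢; linarith [hx.2]⟩
      0 ⟨le_refl _, hb⟩, abs_of_nonneg (by linarith [hx.1] : (0:ℝ) ≤ x - (a + m) - 0)]
    ring
  have dηq : ∀ x ∈ Icc (a + m) T, dist (η x) q = T - x := by
    intro x hx
    rw [ev3 x hx, ← hc2b, dc2 _ ⟨by linarith [hx.1], by simp [hT_def] at hx ⊢; linarith [hx.2]⟩
      b ⟨hb, le_refl _⟩, abs_of_nonpos (by simp [hT_def] at hx ⊢; linarith [hx.2])]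
    simp [hT_def]; ring
  have dmidmid : ∀ x ∈ Icc a (a + m), ∀ y ∈ Icc a (a + m), dist (η x) (η y) = |x - y| := by
    intro x hx y hy
    rw [ev2 x hx, ev2 y hy, dζ _ _ (by linarith [hx.1]) (by linarith [hy.1])]
    congr 1; ring
  -- upper bound: 1-Lipschitz
  have U : ∀ x ∈ Icc (0:ℝ) T, ∀ y ∈ Icc (0:ℝ) T, x ≤ y → dist (η x) (η y) ≤ y - x := by
    intro x hx y hy hxy
    rcases le_or_gt y a with h1 | h1
    · rw [ev1 x ⟨hx.1, le_trans hxy h1⟩, ev1 y ⟨le_trans hx.1 hxy, h1⟩,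
        dc1 x ⟨hx.1, le_trans hxy h1⟩ y ⟨le_trans hx.1 hxy, h1⟩, abs_of_nonpos (by linarith)]
      linarith
    · rcases le_or_gt y (a + m) with h2 | h2
      · rcases le_or_gt x a with h3 | h3
        · calc dist (η x) (η y) ≤ dist (η x) (ζ u) + dist (ζ u) (η y) := dist_triangle _ _ _
            _ = (a - x) + (y - a) := by
                rw [dηu x ⟨hx.1, h3⟩, dist_comm, dmidu y ⟨le_of_lt h1, h2⟩]
            _ ≤ y - x := by linarith
        · rw [dmidmid x ⟨le_of_lt h3, by linarith⟩ y ⟨le_of_lt h1, h2⟩,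
            abs_of_nonpos (by linarith)]; linarith
      · have hy3 : y ∈ Icc (a + m) T := ⟨le_of_lt h2, hy.2⟩
        rcases le_or_gt x a with h3 | h3
        · calc dist (η x) (η y) ≤ dist (η x) (ζ u) + (dist (ζ u) (ζ v) + dist (ζ v) (η y)) :=
              le_trans (dist_triangle _ _ _) (by linarith [dist_triangle (ζ u) (ζ v) (η y)])
            _ = (a - x) + (m + (y - (a + m))) := by
                rw [dηu x ⟨hx.1, h3⟩, dζ u v hu (by linarith),
                  abs_of_nonpos (by linarith : u - v ≤ 0), dist_comm, dηv y hy3]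
                simp [hm_def]
            _ ≤ y - x := by linarith
        · rcases le_or_gt x (a + m) with h4 | h4
          · calc dist (η x) (η y) ≤ dist (η x) (ζ v) + dist (ζ v) (η y) := dist_triangle _ _ _
              _ = (a + m - x) + (y - (a + m)) := by
                  rw [dmidv x ⟨le_of_lt h3, h4⟩, dist_comm, dηv y hy3]
              _ ≤ y - x := by linarith
          · rw [ev3 x ⟨le_of_lt h4, hx.2⟩, ev3 y hy3,
              dc2 _ ⟨by linarith, by simp [hT_def] at hx ⊢; linarith [hx.2]⟩
                _ ⟨by linarith, by simp [hT_def] at hy ⊢; linarith [hy.2]⟩,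
              abs_of_nonpos (by linarith)]
            linarith
  -- lower bound
  have hSne : (ξ '' Ici 0).Nonempty := ⟨p, hp⟩
  have LB : ∀ x ∈ Icc (0:ℝ) T, ∀ y ∈ Icc (0:ℝ) T, x ≤ y →
      (y - x)/3 - ε ≤ dist (η x) (η y) := by
    intro x hx y hy hxy
    have hd0 : 0 ≤ dist (η x) (η y) := dist_nonneg
    rcases le_or_gt y a with h1 | h1
    · have hxI : x ∈ Icc (0:ℝ) a := ⟨hx.1, le_trans hxy h1⟩
      have hyI : y ∈ Icc (0:ℝ) a := ⟨le_trans hx.1 hxy, h1⟩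
      rw [ev1 x hxI, ev1 y hyI, dc1 x hxI y hyI, abs_of_nonpos (by linarith)]
      linarith
    · rcases le_or_gt y (a + m) with h2 | h2
      · rcases le_or_gt x a with h3 | h3
        · -- x ∈ [0,a], y ∈ [a, a+m]
          have hxI : x ∈ Icc (0:ℝ) a := ⟨hx.1, h3⟩
          have hyI : y ∈ Icc a (a + m) := ⟨le_of_lt h1, h2⟩
          set w := u + (y - a) with hw_def
          have hwI : w ∈ Icc u v := ⟨by linarith [hyI.1], by simp [hw_def, hm_def] at h2 ⊢; linarith⟩
          have hηyw : η y = ζ w := ev2 y hyI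
          have lower1 : (y - a) - (a - x) ≤ dist (η x) (η y) := by
            have t1 := dist_triangle (ζ u) (η x) (η y)
            rw [dist_comm (ζ u) (η x), dηu x hxI] at t1
            have t2 : dist (ζ u) (η y) = y - a := by rw [dist_comm]; exact dmidu y hyI
            linarith
          have lower2 : (a - x) - ε ≤ dist (η x) (η y) := by
            have i1 : Metric.infDist (ζ w) (ξ '' Ici 0) ≤ dist (ζ w) p :=
              Metric.infDist_le_dist_of_mem hp
            have i2 : dist (ζ w) p ≤ dist (ζ w) (η x) + dist (η x) p := dist_triangle _ _ _
            rw [dηp x hxI, ← hηyw, dist_comm (η y) (η x)] at i2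
            have i3 := H1 w hwI
            rw [← hηyw] at i1 i3
            have : a - ε ≤ max a b - ε := by linarith
            linarith
          rcases le_or_gt (2*(a - x)) (y - a) with hc | hc
          · linarith
          · linarith
        · rw [dmidmid x ⟨le_of_lt h3, by linarith⟩ y ⟨le_of_lt h1, h2⟩,
            abs_of_nonpos (by linarith)]
          linarith
      · have hyI : y ∈ Icc (a + m) T := ⟨le_of_lt h2, hy.2⟩
        rcases le_or_gt x a with h3 | h3
        · -- x ∈ [0,a], y ∈ [a+m, T]
          have hxI : x ∈ Icc (0:ℝ) a := ⟨hx.1, h3⟩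
          have hA2 : y - (a + m) ≤ b := by simp [hT_def] at hy ⊢; linarith [hy.2]
          have lower : m - (a - x) - (y - (a + m)) ≤ dist (η x) (η y) := by
            have t1 := dist_triangle (ζ u) (η x) (ζ v)
            have t2 := dist_triangle (η x) (η y) (ζ v)
            rw [dist_comm (ζ u) (η x), dηu x hxI] at t1
            rw [dηv y hyI] at t2
            have hd_uv : dist (ζ u) (ζ v) = m := by
              rw [dζ u v hu (by linarith : (0:ℝ) ≤ v), abs_of_nonpos (by linarith : u - v ≤ 0)]
              simp [hm_def]
            rw [hd_uv] at t1
            linarith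
          have h1' : a - x ≤ max a b := le_trans (by linarith [hx.1]) hamax
          have h2' : y - (a + m) ≤ max a b := le_trans hA2 hbmax
          linarith
        · rcases le_or_gt x (a + m) with h4 | h4
          · -- x ∈ [a, a+m], y ∈ [a+m, T]
            have hxI : x ∈ Icc a (a + m) := ⟨le_of_lt h3, h4⟩
            set w := u + (x - a) with hw_def
            have hwI : w ∈ Icc u v := ⟨by linarith [hxI.1], by simp [hw_def, hm_def] at h4 ⊢; linarith⟩
            have hηxw : η x = ζ w := ev2 x hxI
            have lower1 : (a + m - x) - (y - (a + m)) ≤ dist (η x) (η y) := by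
              have t1 := dist_triangle (η x) (η y) (ζ v)
              rw [dηv y hyI, dmidv x hxI] at t1
              linarith
            have lower2 : (y - (a + m)) - ε ≤ dist (η x) (η y) := by
              have i1 : Metric.infDist (ζ w) (ξ '' Ici 0) ≤ dist (ζ w) q :=
                Metric.infDist_le_dist_of_mem hq
              have i2 : dist (ζ w) q ≤ dist (ζ w) (η y) + dist (η y) q := dist_triangle _ _ _
              rw [dηq y hyI, ← hηxw] at i2
              have i3 := H1 w hwI
              rw [← hηxw] at i1 i3
              have hbm : b - ε ≤ max a b - ε := by linarith
              have hTy : T - y = b - (y - (a + m)) := by simp [hT_def]; ring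
              rw [hTy] at i2
              linarith
            rcases le_or_gt (2*(y - (a + m))) (a + m - x) with hc | hc
            · linarith
            · linarith
          · rw [ev3 x ⟨le_of_lt h4, hx.2⟩, ev3 y hyI,
              dc2 _ ⟨by linarith, by simp [hT_def] at hx ⊢; linarith [hx.2]⟩
                _ ⟨by linarith, by simp [hT_def] at hy ⊢; linarith [hy.2]⟩,
              abs_of_nonpos (by linarith)]
            linarith
  -- quasi-geodesic property
  have hQG : IsQGOn 3 ε η (Icc 0 T) := by
    intro s hs t ht
    constructor
    · rcases le_total s t with hst | hst
      · have h := LB s hs t ht hst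
        rw [abs_of_nonpos (by linarith)]
        linarith
      · have h := LB t ht s hs hst
        rw [dist_comm, abs_of_nonneg (by linarith)]
        linarith
    · rcases le_total s t with hst | hst
      · have h := U s hs t ht hst
        rw [abs_of_nonpos (by linarith)]
        linarith
      · have h := U t ht s hs hst
        rw [dist_comm, abs_of_nonneg (by linarith)]
        linarith
  have hT0 : (0:ℝ) ≤ T := by simp [hT_def]; linarith
  have hη0 : η 0 ∈ ξ '' Ici 0 := by
    rw [ev1 0 ⟨le_refl _, ha⟩, hc10]; exact hp
  have hηT : η T ∈ ξ '' Ici 0 := by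
    have hTm : T ∈ Icc (a + m) T := ⟨by simp [hT_def]; linarith, le_refl _⟩
    rw [ev3 T hTm]
    have hTb : T - (a + m) = dist (ζ v) q := by simp [hT_def]; exact hb_def
    rw [hTb, hc2b]; exact hq
  intro w hw
  have hx' : a + (w - u) ∈ Icc (0:ℝ) T :=
    ⟨by linarith [hw.1], by simp [hT_def, hm_def]; linarith [hw.2]⟩
  have hx2 : a + (w - u) ∈ Icc a (a + m) :=
    ⟨by linarith [hw.1], by simp [hm_def]; linarith [hw.2]⟩
  have hval : η (a + (w - u)) = ζ w := by
    rw [ev2 _ hx2]; congr 1; ring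
  obtain ⟨s, hs0, hds⟩ :=
    hM 3 ε (by norm_num) hε η 0 T hT0 hQG hη0 hηT (a + (w - u)) hx'
  rw [hval] at hds
  exact le_trans (Metric.infDist_le_dist_of_mem ⟨s, hs0, rfl⟩) hds
lemma extend_lemma (M : MorseGauge) (hX : GeodesicSpace X) (ξ ζ : ℝ → X) (D : ℝ) (hD : 0 ≤ D)
    (hclose : ∀ s : ℝ, 0 ≤ s → dist (ξ s) (ζ s) ≤ D)
    (hM : IsMorseOn M ξ (Ici 0)) :
    IsMorseOn (fun L e => M L (e + 4*D) + D) ζ (Ici 0) := by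
  intro L e hL he η a b hab hQG hea heb t ht
  obtain ⟨u₀, hu₀, h₀⟩ := hea
  obtain ⟨u₁, hu₁, h₁⟩ := heb
  have hL0 : (0:ℝ) < L := lt_of_lt_of_le one_pos hL
  have hinv1 : 1/L ≤ 1 := by rw [div_le_one hL0]; exact hL
  have hinv0 : 0 ≤ 1/L := le_of_lt (by positivity)
  obtain ⟨c₀, hc00, hc0d, hc0g⟩ := hX (ξ u₀) (ζ u₀)
  obtain ⟨c₁, hc10, hc1d, hc1g⟩ := hX (ζ u₁) (ξ u₁)
  set d₀ := dist (ξ u₀) (ζ u₀) with hd0_def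
  set d₁ := dist (ζ u₁) (ξ u₁) with hd1_def
  have hd₀D : d₀ ≤ D := hclose u₀ hu₀
  have hd₁D : d₁ ≤ D := by rw [hd1_def, dist_comm]; exact hclose u₁ hu₁
  have hd₀0 : 0 ≤ d₀ := dist_nonneg
  have hd₁0 : 0 ≤ d₁ := dist_nonneg
  set η' : ℝ → X := fun x => if x < a then c₀ (x - (a - d₀)) else if x ≤ b then η x else
    c₁ (x - b) with hη'_def
  have ev1 : ∀ x ∈ Icc a b, η' x = η x := by
    intro x hx
    simp only [hη'_def]
    rw [if_neg (not_lt.2 hx.1), if_pos hx.2]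
  have ev0 : ∀ x ∈ Icc (a - d₀) a,
      dist (η' x) (η a) = a - x ∧ dist (η' x) (ξ u₀) = x - (a - d₀) := by
    intro x hx
    by_cases hxa : x < a
    · have hη'x : η' x = c₀ (x - (a - d₀)) := by
        simp only [hη'_def]; rw [if_pos hxa]
      have hy : x - (a - d₀) ∈ Icc (0:ℝ) d₀ := ⟨by linarith [hx.1], by linarith⟩
      have hηa : η a = c₀ d₀ := by rw [← h₀, hc0d]
      constructor
      · rw [hη'x, hηa, hc0g _ hy d₀ ⟨hd₀0, le_refl _⟩,
          abs_of_nonpos (by linarith : x - (a - d₀) - d₀ ≤ 0)]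
        ring
      · rw [hη'x, ← hc00, hc0g _ hy 0 ⟨le_refl _, hd₀0⟩,
          abs_of_nonneg (by linarith [hx.1] : (0:ℝ) ≤ x - (a - d₀) - 0)]
        ring
    · have hxx : x = a := le_antisymm hx.2 (not_lt.1 hxa)
      have h' : η' x = η a := by rw [hxx]; exact ev1 a ⟨le_refl _, hab⟩
      constructor
      · rw [h', hxx, dist_self]; ring
      · rw [h', ← h₀, dist_comm, hxx]
        simp [hd0_def]
  have ev2 : ∀ x ∈ Icc b (b + d₁),
      dist (η' x) (η b) = x - b ∧ dist (η' x) (ξ u₁) = (b + d₁) - x := by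
    intro x hx
    by_cases hxb : x ≤ b
    · have hxx : x = b := le_antisymm hxb hx.1
      have h' : η' x = η b := by rw [hxx]; exact ev1 b ⟨hab, le_refl _⟩
      constructor
      · rw [h', hxx, dist_self]; ring
      · rw [h', ← h₁, hxx]
        simp [hd1_def]
    · have hxa : ¬ x < a := not_lt.2 (by linarith [hx.1])
      have hη'x : η' x = c₁ (x - b) := by
        simp only [hη'_def]; rw [if_neg hxa, if_neg hxb]
      have hy : x - b ∈ Icc (0:ℝ) d₁ := ⟨by linarith [hx.1], by linarith [hx.2]⟩
      constructor
      · rw [hη'x, ← h₁, ← hc10, hc1g _ hy 0 ⟨le_refl _, hd₁0⟩,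
          abs_of_nonneg (by linarith [hx.1] : (0:ℝ) ≤ x - b - 0)]
        ring
      · rw [hη'x, ← hc1d, hc1g _ hy d₁ ⟨hd₁0, le_refl _⟩,
          abs_of_nonpos (by linarith [hx.2] : x - b - d₁ ≤ 0)]
        ring
  -- bounds
  have BND : ∀ x ∈ Icc (a - d₀) (b + d₁), ∀ y ∈ Icc (a - d₀) (b + d₁), x ≤ y →
      (1/L) * (y - x) - (e + 4*D) ≤ dist (η' x) (η' y) ∧
      dist (η' x) (η' y) ≤ L * (y - x) + (e + 4*D) := by
    intro x hx y hy hxy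
    have hd0' : 0 ≤ dist (η' x) (η' y) := dist_nonneg
    have hdec : (1/L) * (y - x) ≤ y - x := mul_le_of_le_one_left (by linarith) hinv1
    rcases le_or_gt y a with h1 | h1
    · -- both in left cap
      have hxI : x ∈ Icc (a - d₀) a := ⟨hx.1, le_trans hxy h1⟩
      have hyI : y ∈ Icc (a - d₀) a := ⟨le_trans hx.1 hxy, h1⟩
      have t1 := dist_triangle (η' x) (η a) (η' y)
      rw [(ev0 x hxI).1] at t1
      have t2 : dist (η a) (η' y) = a - y := by rw [dist_comm]; exact (ev0 y hyI).1
      rw [t2] at t1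
      constructor
      · have : (1/L) * (y - x) ≤ D := le_trans hdec (by linarith [hxI.1])
        linarith
      · have hLyx : 0 ≤ L * (y - x) := mul_nonneg (le_of_lt hL0) (by linarith)
        linarith [hxI.1, hyI.1]
    · rcases le_or_gt y b with h2 | h2
      · have hyI : y ∈ Icc a b := ⟨le_of_lt h1, h2⟩
        rcases le_or_gt x a with h3 | h3
        · -- left cap to middle
          have hxI : x ∈ Icc (a - d₀) a := ⟨hx.1, h3⟩
          have hmid := hQG a ⟨le_refl _, hab⟩ y hyI
          have habs : |a - y| = y - a := by rw [abs_of_nonpos (by linarith : a - y ≤ 0)]; ring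
          rw [habs] at hmid
          have t1 := dist_triangle (η' x) (η a) (η' y)
          have t2 := dist_triangle (η a) (η' x) (η' y)
          rw [(ev0 x hxI).1] at t1
          rw [dist_comm (η a) (η' x), (ev0 x hxI).1] at t2
          have hηy : η' y = η y := ev1 y hyI
          rw [hηy] at t1 t2 ⊢
          have hsplit : (1/L) * (y - x) = (1/L) * (y - a) + (1/L) * (a - x) := by ring
          have hax : (1/L) * (a - x) ≤ D :=
            le_trans (mul_le_of_le_one_left (by linarith) hinv1) (by linarith [hxI.1])
          have hLax : L * (y - a) ≤ L * (y - x) :=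
            mul_le_mul_of_nonneg_left (by linarith) (le_of_lt hL0)
          constructor
          · linarith [hmid.1, hxI.1, hd₀D]
          · linarith [hmid.2, hxI.1, hd₀D]
        · -- both in middle
          have hxI : x ∈ Icc a b := ⟨le_of_lt h3, le_trans hxy hyI.2⟩
          have h := hQG x hxI y hyI
          have habs : |x - y| = y - x := by rw [abs_of_nonpos (by linarith)]; ring
          rw [habs] at h
          rw [ev1 x hxI, ev1 y hyI]
          exact ⟨by linarith [h.1], by linarith [h.2]⟩
      · have hyI : y ∈ Icc b (b + d₁) := ⟨le_of_lt h2, hy.2⟩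
        have e2y : dist (η' y) (η b) = y - b := (ev2 y hyI).1
        rcases le_or_gt x a with h3 | h3
        · -- left cap to right cap
          have hxI : x ∈ Icc (a - d₀) a := ⟨hx.1, h3⟩
          have e0x : dist (η' x) (η a) = a - x := (ev0 x hxI).1
          have hmid := hQG a ⟨le_refl _, hab⟩ b ⟨hab, le_refl _⟩
          have habs : |a - b| = b - a := by rw [abs_of_nonpos (by linarith : a - b ≤ 0)]; ring
          rw [habs] at hmid
          have t1 := dist_triangle (η a) (η' x) (η b)
          have t1b := dist_triangle (η' x) (η' y) (η b)
          have tu := dist_triangle (η' x) (η a) (η' y)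
          have tu2 := dist_triangle (η a) (η b) (η' y)
          rw [dist_comm (η a) (η' x), e0x] at t1
          have e2y' : dist (η b) (η' y) = y - b := by rw [dist_comm]; exact e2y
          rw [e2y] at t1b
          rw [e2y'] at tu2
          rw [e0x] at tu
          have hsplit : (1/L) * (y - x) =
              (1/L) * (b - a) + (1/L) * (a - x) + (1/L) * (y - b) := by ring
          have hax : (1/L) * (a - x) ≤ D :=
            le_trans (mul_le_of_le_one_left (by linarith) hinv1) (by linarith [hxI.1])
          have hyb : (1/L) * (y - b) ≤ D :=
            le_trans (mul_le_of_le_one_left (by linarith) hinv1) (by linarith [hyI.2])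
          have hLab : L * (b - a) ≤ L * (y - x) :=
            mul_le_mul_of_nonneg_left (by linarith) (le_of_lt hL0)
          constructor
          · linarith [hmid.1, hxI.1, hyI.2, hd₀D, hd₁D]
          · linarith [hmid.2, hxI.1, hyI.2, hd₀D, hd₁D]
        · -- middle or right cap to right cap
          rcases le_or_gt x b with h4 | h4
          · -- middle to right cap
            have hxI : x ∈ Icc a b := ⟨le_of_lt h3, h4⟩
            have hηx : η' x = η x := ev1 x hxI
            have hmid := hQG x hxI b ⟨hab, le_refl _⟩
            have habs : |x - b| = b - x := by rw [abs_of_nonpos (by linarith : x - b ≤ 0)]; ring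
            rw [habs] at hmid
            have t1 := dist_triangle (η x) (η b) (η' y)
            have tu := dist_triangle (η x) (η' y) (η b)
            have e2y' : dist (η b) (η' y) = y - b := by rw [dist_comm]; exact e2y
            rw [e2y'] at t1
            rw [e2y] at tu
            rw [hηx]
            have hsplit : (1/L) * (y - x) = (1/L) * (b - x) + (1/L) * (y - b) := by ring
            have hyb : (1/L) * (y - b) ≤ D :=
              le_trans (mul_le_of_le_one_left (by linarith) hinv1) (by linarith [hyI.2])
            have hLbx : L * (b - x) ≤ L * (y - x) :=
              mul_le_mul_of_nonneg_left (by linarith) (le_of_lt hL0)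
            constructor
            · linarith [hmid.1, hyI.2, hd₁D]
            · linarith [hmid.2, hyI.2, hd₁D]
          · -- both right cap
            have hxI : x ∈ Icc b (b + d₁) := ⟨le_of_lt h4, hx.2⟩
            have e2x : dist (η' x) (η b) = x - b := (ev2 x hxI).1
            have t1 := dist_triangle (η' x) (η b) (η' y)
            rw [dist_comm (η' y) (η b)] at e2y
            rw [e2x, e2y] at t1
            constructor
            · have : (1/L) * (y - x) ≤ D := le_trans hdec (by linarith [hyI.2])
              linarith
            · have hLyx : 0 ≤ L * (y - x) := mul_nonneg (le_of_lt hL0) (by linarith)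
              linarith [hxI.1, hyI.2]
  -- assemble quasi-geodesic property and conclude
  have hQG' : IsQGOn L (e + 4*D) η' (Icc (a - d₀) (b + d₁)) := by
    intro s hs t' ht'
    rcases le_total s t' with hst | hst
    · have h := BND s hs t' ht' hst
      rw [abs_of_nonpos (by linarith)]
      constructor
      · have : (1/L) * -(s - t') = (1/L) * (t' - s) := by ring
        rw [this]; exact h.1
      · have : L * -(s - t') = L * (t' - s) := by ring
        rw [this]; exact h.2
    · have h := BND t' ht' s hs hst
      rw [dist_comm, abs_of_nonneg (by linarith)]
      constructor
      · have : (1/L) * (s - t') = (1/L) * (s - t') := rfl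
        exact h.1
      · exact h.2
  have hend0 : η' (a - d₀) ∈ ξ '' Ici 0 := by
    have h := (ev0 (a - d₀) ⟨le_refl _, by linarith⟩).2
    have : dist (η' (a - d₀)) (ξ u₀) = 0 := by rw [h]; ring
    rw [dist_eq_zero] at this
    rw [this]
    exact ⟨u₀, hu₀, rfl⟩
  have hend1 : η' (b + d₁) ∈ ξ '' Ici 0 := by
    have h := (ev2 (b + d₁) ⟨by linarith, le_refl _⟩).2
    have : dist (η' (b + d₁)) (ξ u₁) = 0 := by rw [h]; ring
    rw [dist_eq_zero] at this
    rw [this]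
    exact ⟨u₁, hu₁, rfl⟩
  obtain ⟨s, hs0, hds⟩ := hM L (e + 4*D) hL (by linarith) η' (a - d₀) (b + d₁)
    (by linarith) hQG' hend0 hend1 t ⟨by linarith [ht.1], by linarith [ht.2]⟩
  rw [ev1 t ht] at hds
  refine ⟨s, hs0, ?_⟩
  calc dist (η t) (ζ s) ≤ dist (η t) (ξ s) + dist (ξ s) (ζ s) := dist_triangle _ _ _
    _ ≤ M L (e + 4*D) + D := add_le_add hds (hclose s hs0)
lemma main_bound (M : MorseGauge) (hX : GeodesicSpace X) (e : X) (ξ ζ : ℝ → X)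
    (hξ : IsRayFrom e ξ) (hMξ : IsMorseOn M ξ (Ici 0)) (hζ : IsRayFrom e ζ)
    (C : ℝ) (hC : ∀ t ≥ (0:ℝ), dist (ξ t) (ζ t) ≤ C) :
    ∀ t ≥ (0:ℝ), dist (ξ t) (ζ t) ≤
      2 * (max (M 3 1) (9 * (max (M 3 3) 0 + 3) + 8)) + 2 := by
  obtain ⟨hξ0, hξg⟩ := hξ
  obtain ⟨hζ0, hζg⟩ := hζ
  set S := ξ '' Ici 0 with hS_def
  have hSne : S.Nonempty := ⟨ξ 0, 0, Set.self_mem_Ici, rfl⟩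
  set f : ℝ → ℝ := fun t => Metric.infDist (ζ t) S with hf_def
  have f_nonneg : ∀ t, 0 ≤ f t := fun t => Metric.infDist_nonneg
  have f0 : f 0 = 0 := by
    simp only [hf_def]
    apply Metric.infDist_zero_of_mem
    rw [hζ0, ← hξ0]
    exact ⟨0, Set.self_mem_Ici, rfl⟩
  have fC : ∀ t ≥ (0:ℝ), f t ≤ C := by
    intro t ht
    exact le_trans (Metric.infDist_le_dist_of_mem ⟨t, mem_Ici.2 ht, rfl⟩)
      (by rw [dist_comm]; exact hC t ht)
  have C0 : 0 ≤ C := le_trans (f_nonneg 0) (fC 0 (le_refl _))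
  have flip : ∀ s t : ℝ, 0 ≤ s → 0 ≤ t → f s ≤ f t + |s - t| := by
    intro s t hs ht
    calc f s ≤ f t + dist (ζ s) (ζ t) := Metric.infDist_le_infDist_add_dist
      _ = f t + |s - t| := by rw [hζg s hs t ht]
  -- liminf machinery
  set g : ℝ → ℝ := fun T => sInf (f '' Ici T) with hg_def
  have g_ne : ∀ T : ℝ, (f '' Ici T).Nonempty := fun T => ⟨f T, T, Set.self_mem_Ici, rfl⟩
  have g_bdd : ∀ T : ℝ, BddBelow (f '' Ici T) := by
    intro T
    exact ⟨0, fun x ⟨w, _, hw⟩ => hw ▸ f_nonneg w⟩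
  have g_le : ∀ T t : ℝ, T ≤ t → g T ≤ f t := by
    intro T t h
    exact csInf_le (g_bdd T) ⟨t, h, rfl⟩
  have g_approx : ∀ T : ℝ, ∀ δ > (0:ℝ), ∃ t ≥ T, f t < g T + δ := by
    intro T δ hδ
    obtain ⟨x, ⟨t, ht, rfl⟩, hx⟩ := exists_lt_of_csInf_lt (g_ne T) (by linarith : sInf (f '' Ici T) < g T + δ)
    exact ⟨t, ht, hx⟩
  have g_nonneg : ∀ T : ℝ, 0 ≤ g T := by
    intro T
    exact le_csInf (g_ne T) (fun x ⟨w, _, hw⟩ => hw ▸ f_nonneg w)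
  set lam : ℝ := sSup (g '' Ici 0) with hlam_def
  have glam_bdd : BddAbove (g '' Ici 0) := by
    refine ⟨C, ?_⟩
    rintro x ⟨T, hT, rfl⟩
    exact le_trans (g_le T T (le_refl _)) (fC T hT)
  have g_le_lam : ∀ T ≥ (0:ℝ), g T ≤ lam := by
    intro T hT
    exact le_csSup glam_bdd ⟨T, hT, rfl⟩
  have lam_nonneg : 0 ≤ lam := le_trans (g_nonneg 0) (g_le_lam 0 (le_refl _))
  -- bound lam
  have hlam : lam ≤ max (M 3 3) 0 + 1 := by
    obtain ⟨x, ⟨T₁, hT₁0, rfl⟩, hT₁gt⟩ :=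
      exists_lt_of_lt_csSup (⟨g 0, ⟨0, Set.self_mem_Ici, rfl⟩⟩ : (g '' Ici 0).Nonempty)
        (by linarith : lam - 1 < sSup (g '' Ici 0))
    have hlow : ∀ t ≥ T₁, lam - 1 < f t := fun t ht => lt_of_lt_of_le hT₁gt (g_le T₁ t ht)
    obtain ⟨u, hu1, hu2⟩ := g_approx T₁ 1 one_pos
    have hu0 : 0 ≤ u := le_trans hT₁0 hu1
    have hfu : f u < lam + 1 := lt_of_lt_of_le hu2 (by linarith [g_le_lam T₁ hT₁0])
    obtain ⟨p, hpS, hdp⟩ := (Metric.infDist_lt_iff hSne).1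
      (lt_of_lt_of_le hfu (by linarith) : f u < lam + 2)
    obtain ⟨v, hv1, hv2⟩ := g_approx (max T₁ (u + 8 * (lam + 2))) 1 one_pos
    have hvT₁ : T₁ ≤ v := le_trans (le_max_left _ _) hv1
    have hvu : u + 8 * (lam + 2) ≤ v := le_trans (le_max_right _ _) hv1
    have hfv : f v < lam + 1 := lt_of_lt_of_le hv2
      (by linarith [g_le_lam (max T₁ (u + 8 * (lam + 2))) (le_trans hT₁0 (le_max_left _ _))])
    obtain ⟨q, hqS, hdq⟩ := (Metric.infDist_lt_iff hSne).1
      (lt_of_lt_of_le hfv (by linarith) : f v < lam + 2)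
    have huv : u ≤ v := by linarith
    have hmaxlt : max (dist (ζ u) p) (dist (ζ v) q) < lam + 2 := max_lt hdp hdq
    have hkey := key_lemma M hX ξ ζ hMξ hζg u v hu0 huv 3 (by norm_num) p q hpS hqS
      (by
        intro w hw
        have : lam - 1 < f w := hlow w (le_trans hu1 hw.1)
        simp only [hf_def] at this ⊢
        linarith [hmaxlt])
      (by linarith [hmaxlt])
    have := hkey u ⟨le_refl _, huv⟩
    have hfuM : f u ≤ M 3 3 := this
    have := hlow u hu1
    have : lam - 1 < M 3 3 := by linarith
    have : M 3 3 ≤ max (M 3 3) 0 := le_max_left _ _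
    linarith
  set l : ℝ := max (M 3 3) 0 + 3 with hl_def
  have hl0 : 0 < l := by
    have : (0:ℝ) ≤ max (M 3 3) 0 := le_max_right _ _
    simp only [hl_def]; linarith
  have hlaml : lam + 1 < l := by
    have : (0:ℝ) ≤ max (M 3 3) 0 := le_max_right _ _
    simp only [hl_def]; linarith
  set D₁ : ℝ := max (M 3 1) (9 * l + 8) with hD₁_def
  have hD₁0 : 0 ≤ D₁ := le_trans (by linarith) (le_max_right _ _)
  -- the uniform bound on f
  have funif : ∀ t ≥ (0:ℝ), f t ≤ D₁ := by
    intro t ht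
    by_cases hft : f t ≤ l
    · exact le_trans hft (le_trans (by linarith) (le_max_right _ _))
    push_neg at hft
    -- left crossing
    set A : Set ℝ := {w | w ∈ Icc 0 t ∧ f w ≤ l} with hA_def
    have hA0 : (0:ℝ) ∈ A := ⟨⟨le_refl _, ht⟩, by rw [f0]; linarith⟩
    have hAne : A.Nonempty := ⟨0, hA0⟩
    have hAbdd : BddAbove A := ⟨t, fun w hw => hw.1.2⟩
    set u := sSup A with hu_def
    have hu0 : 0 ≤ u := le_csSup hAbdd hA0
    have hut : u ≤ t := csSup_le hAne (fun w hw => hw.1.2)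
    have hfu_le : f u ≤ l := by
      apply le_of_forall_pos_le_add
      intro δ hδ
      obtain ⟨w, hwA, hw⟩ := exists_lt_of_lt_csSup hAne (by linarith : u - δ < u)
      have hwu : w ≤ u := le_csSup hAbdd hwA
      have := flip u w hu0 hwA.1.1
      rw [abs_of_nonneg (by linarith)] at this
      linarith [hwA.2]
    have hgt : ∀ w, u < w → w ≤ t → l < f w := by
      intro w hw1 hw2
      by_contra hcon
      push_neg at hcon
      have : w ∈ A := ⟨⟨le_trans hu0 (le_of_lt hw1), hw2⟩, hcon⟩
      linarith [le_csSup hAbdd this]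
    have hut' : u < t := by
      rcases lt_or_eq_of_le hut with h | h
      · exact h
      · rw [h] at hfu_le; linarith
    have hfu_ge : l ≤ f u := by
      apply le_of_forall_pos_le_add
      intro δ hδ
      set w := min t (u + δ) with hw_def
      have hw1 : u < w := lt_min hut' (by linarith)
      have hw2 : w ≤ t := min_le_left _ _
      have hflw := hgt w hw1 hw2
      have := flip w u (by linarith) hu0
      rw [abs_of_nonneg (by linarith)] at this
      have hwu : w - u ≤ δ := by
        have : w ≤ u + δ := min_le_right _ _
        linarith
      linarith
    -- right crossing
    set B : Set ℝ := {w | t ≤ w ∧ f w ≤ l} with hB_def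
    have hBne : B.Nonempty := by
      obtain ⟨w, hw1, hw2⟩ := g_approx t 1 one_pos
      exact ⟨w, hw1, by linarith [g_le_lam t ht]⟩
    have hBbdd : BddBelow B := ⟨t, fun w hw => hw.1⟩
    set v := sInf B with hv_def
    have htv : t ≤ v := le_csInf hBne (fun w hw => hw.1)
    have hv0 : 0 ≤ v := le_trans ht htv
    have hfv_le : f v ≤ l := by
      apply le_of_forall_pos_le_add
      intro δ hδ
      obtain ⟨w, hwB, hw⟩ := exists_lt_of_csInf_lt hBne (by linarith : sInf B < v + δ)
      have hvw : v ≤ w := csInf_le hBbdd hwB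
      have := flip v w hv0 (le_trans ht hwB.1)
      rw [abs_of_nonpos (by linarith)] at this
      linarith [hwB.2]
    have hgt2 : ∀ w, t ≤ w → w < v → l < f w := by
      intro w hw1 hw2
      by_contra hcon
      push_neg at hcon
      have : w ∈ B := ⟨hw1, hcon⟩
      linarith [csInf_le hBbdd this]
    have htv' : t < v := by
      rcases lt_or_eq_of_le htv with h | h
      · exact h
      · rw [← h] at hfv_le; linarith
    have hfv_ge : l ≤ f v := by
      apply le_of_forall_pos_le_add
      intro δ hδ
      set w := max t (v - δ) with hw_def
      have hw1 : w < v := max_lt htv' (by linarith)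
      have hw2 : t ≤ w := le_max_left _ _
      have hflw := hgt2 w hw2 hw1
      have := flip w v (le_trans ht hw2) hv0
      rw [abs_of_nonpos (by linarith)] at this
      have hwv : v - w ≤ δ := by
        have : v - δ ≤ w := le_max_right _ _
        linarith
      linarith
    -- f ≥ l on [u, v]
    have hH1 : ∀ w ∈ Icc u v, l ≤ f w := by
      intro w hw
      rcases le_or_gt w t with h | h
      · rcases eq_or_lt_of_le hw.1 with h2 | h2
        · rw [← h2]; exact hfu_ge
        · exact le_of_lt (hgt w h2 h)
      · rcases eq_or_lt_of_le hw.2 with h2 | h2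
        · rw [h2]; exact hfv_ge
        · exact le_of_lt (hgt2 w (le_of_lt h) h2)
    -- caps
    obtain ⟨p, hpS, hdp⟩ := (Metric.infDist_lt_iff hSne).1
      (by linarith : f u < l + 1)
    obtain ⟨q, hqS, hdq⟩ := (Metric.infDist_lt_iff hSne).1
      (by linarith : f v < l + 1)
    have hmaxlt : max (dist (ζ u) p) (dist (ζ v) q) < l + 1 := max_lt hdp hdq
    rcases le_or_gt (8 * (l + 1)) (v - u) with hcase | hcase
    · have hkey := key_lemma M hX ξ ζ hMξ hζg u v hu0 (by linarith) 1 (by norm_num)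
        p q hpS hqS
        (by
          intro w hw
          have := hH1 w hw
          simp only [hf_def] at this ⊢
          linarith [hmaxlt])
        (by linarith [hmaxlt])
      have := hkey t ⟨le_of_lt hut', le_of_lt htv'⟩
      exact le_trans this (le_max_left _ _)
    · have := flip t u ht hu0
      rw [abs_of_nonneg (by linarith)] at this
      have : f t ≤ l + (v - u) := by linarith
      have : f t ≤ 9 * l + 8 := by linarith
      exact le_trans this (le_max_right _ _)
  -- upgrade to pointwise distance bound
  intro t ht
  obtain ⟨y, hyS, hdy⟩ := (Metric.infDist_lt_iff hSne).1
    (lt_of_le_of_lt (funif t ht) (by linarith) : f t < D₁ + 1)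
  obtain ⟨s, hs0m, rfl⟩ := hyS
  have hs0 : (0:ℝ) ≤ s := mem_Ici.1 hs0m
  have hdse : dist e (ξ s) = s := by
    rw [← hξ0, hξg 0 Set.self_mem_Ici s hs0m, abs_of_nonpos (by linarith : (0:ℝ) - s ≤ 0)]
    ring
  have hdte : dist e (ζ t) = t := by
    rw [← hζ0, hζg 0 Set.self_mem_Ici t (mem_Ici.2 ht),
      abs_of_nonpos (by linarith : (0:ℝ) - t ≤ 0)]
    ring
  have habs : |s - t| ≤ dist (ξ s) (ζ t) := by
    have := abs_dist_sub_le (ξ s) (ζ t) e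
    rw [dist_comm (ξ s) e, dist_comm (ζ t) e, hdse, hdte] at this
    exact this
  have hd1 : dist (ζ t) (ξ s) < D₁ + 1 := hdy
  have hd2 : dist (ξ t) (ξ s) = |t - s| := hξg t (mem_Ici.2 ht) s hs0m
  calc dist (ξ t) (ζ t) ≤ dist (ξ t) (ξ s) + dist (ξ s) (ζ t) := dist_triangle _ _ _
    _ = |t - s| + dist (ξ s) (ζ t) := by rw [hd2]
    _ ≤ |s - t| + dist (ξ s) (ζ t) := by rw [abs_sub_comm]
    _ ≤ dist (ξ s) (ζ t) + dist (ξ s) (ζ t) := by linarith [habs]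
    _ ≤ 2 * D₁ + 2 := by rw [dist_comm (ξ s) (ζ t)]; linarith [hd1]

/-- any geodesic ray from `e` representing an `M`-Morse direction (i.e. at
bounded distance from an `M`-Morse ray from `e`) is `M_C`-Morse, where `M_C` depends only
on `M`. -/
theorem stmt13 (M : MorseGauge) :
    ∃ MC : MorseGauge,
      ∀ (X : Type) (_ : MetricSpace X) (_ : ProperSpace X), GeodesicSpace X →
        ∀ (e : X) (ξ ζ : ℝ → X),
          IsRayFrom e ξ → IsMorseOn M ξ (Ici 0) →
          IsRayFrom e ζ →
          (∃ C, ∀ t ≥ (0 : ℝ), dist (ξ t) (ζ t) ≤ C) →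
          IsMorseOn MC ζ (Ici 0) := by
  set D : ℝ := 2 * (max (M 3 1) (9 * (max (M 3 3) 0 + 3) + 8)) + 2 with hD_def
  refine ⟨fun L e => M L (e + 4 * D) + D, ?_⟩
  intro X _ _ hX e ξ ζ hξ hM hζ hC
  obtain ⟨C, hC⟩ := hC
  have hb := main_bound M hX e ξ ζ hξ hM hζ C hC
  have hD0 : 0 ≤ D := by
    have h1 : (0:ℝ) ≤ max (M 3 3) 0 := le_max_right _ _
    have h2 : 9 * (max (M 3 3) 0 + 3) + 8 ≤ max (M 3 1) (9 * (max (M 3 3) 0 + 3) + 8) :=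
      le_max_right _ _
    simp only [hD_def]; linarith
  exact extend_lemma M hX ξ ζ D hD0 (fun s hs => hb s hs) hM
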